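/- Every matrix R satisfying R^T H R = H with positive (1,1) entry admits a decomposition R = R_U R_b for some U ∈ O(d) and b ∈ ℝ^d, where R_U = [[1,0],[0,U]] and R_b is the hyperbolic translation matrix. -/

import Mathlib

open Matrix BigOperators

noncomputable section

/-- The Lorentzian signature matrix H = diag(-1, 1, ..., 1). -/
def Hm (d : ℕ) : Matrix (Fin (d+1)) (Fin (d+1)) ℝ :=
  Matrix.diagonal (fun i => if i = 0 then -1 else 1)

/-- The Lorentzian inner product [x, y] = xᵀ H y. -/
def lprod {d : ℕ} (x y : Fin (d+1) → ℝ) : ℝ := x ⬝ᵥ (Hm d).mulVec y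

/-- The 'Loid model of hyperbolic space. -/
def Loid (d : ℕ) : Set (Fin (d+1) → ℝ) := {x | lprod x x = -1 ∧ 0 < x 0}

/-- The projection dropping the first coordinate. -/
def Pproj {d : ℕ} (x : Fin (d+1) → ℝ) : Fin d → ℝ := fun i => x i.succ

/-- The lift z ↦ (√(1+‖z‖²), z). -/
def Qlift {d : ℕ} (z : Fin d → ℝ) : Fin (d+1) → ℝ :=
  Fin.cons (Real.sqrt (1 + ∑ i, z i ^ 2)) z

/-- The positive semidefinite square root of I + b bᵀ (explicit formula;
for b = 0 the coefficient is 0 by division-by-zero convention, giving I). -/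
def sqrtIbb {d : ℕ} (b : Fin d → ℝ) : Matrix (Fin d) (Fin d) ℝ :=
  1 + ((Real.sqrt (1 + ∑ i, b i ^ 2) - 1) / (∑ i, b i ^ 2)) • Matrix.vecMulVec b b

/-- The hyperbolic rotation matrix R_U = [[1, 0ᵀ], [0, U]]. -/
def RU {d : ℕ} (U : Matrix (Fin d) (Fin d) ℝ) : Matrix (Fin (d+1)) (Fin (d+1)) ℝ :=
  Matrix.of (Fin.cons (Fin.cons 1 0) (fun i => Fin.cons 0 (U i)))

/-- The hyperbolic translation matrix R_b = [[√(1+‖b‖²), bᵀ], [b, (I + b bᵀ)^{1/2}]]. -/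
def Rb {d : ℕ} (b : Fin d → ℝ) : Matrix (Fin (d+1)) (Fin (d+1)) ℝ :=
  Matrix.of (Fin.cons (Fin.cons (Real.sqrt (1 + ∑ i, b i ^ 2)) b)
    (fun i => Fin.cons (b i) (sqrtIbb b i)))

/-- The hyperbolic centroid parameter m_x = (1/√(-[x̄,x̄])) · (1/N) Σₙ 𝒫(xₙ). -/
def centroid {d N : ℕ} (x : Fin N → (Fin (d+1) → ℝ)) : Fin d → ℝ :=
  (1 / Real.sqrt (-(lprod ((N:ℝ)⁻¹ • ∑ n, x n) ((N:ℝ)⁻¹ • ∑ n, x n)))) •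
    ((N:ℝ)⁻¹ • ∑ n, Pproj (x n))

theorem stmt_14 (d : ℕ) (R : Matrix (Fin (d+1)) (Fin (d+1)) ℝ)
    (hR : Rᵀ * Hm d * R = Hm d) (hpos : 0 < R 0 0) :
    ∃ (U : Matrix (Fin d) (Fin d) ℝ) (b : Fin d → ℝ),
      Uᵀ * U = 1 ∧ R = RU U * Rb b := by
  have hG2 : Hm d * Hm d = 1 := by
    rw [Hm, Matrix.diagonal_mul_diagonal]
    have : (fun i : Fin (d+1) => (if i = 0 then (-1:ℝ) else 1) * (if i = 0 then -1 else 1)) = fun _ => 1 := by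
      funext i; by_cases h : i = 0 <;> simp [h]
    rw [this, Matrix.diagonal_one]
  have hR' : R * Hm d * Rᵀ = Hm d := by
    have h1 : (Hm d * Rᵀ * Hm d) * R = 1 := by
      calc (Hm d * Rᵀ * Hm d) * R = Hm d * (Rᵀ * Hm d * R) := by
            simp only [mul_assoc]
        _ = 1 := by rw [hR, hG2]
    have h2 : R * (Hm d * Rᵀ * Hm d) = 1 := mul_eq_one_comm.mp h1
    calc R * Hm d * Rᵀ = R * (Hm d * Rᵀ * Hm d) * Hm d := by
          simp only [mul_assoc, hG2, mul_one]
      _ = Hm d := by rw [h2, one_mul]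
  have hRGR : ∀ i j, -(R 0 i * R 0 j) + ∑ k : Fin d, R k.succ i * R k.succ j = Hm d i j := by
    intro i j
    have h : (Rᵀ * Hm d * R) i j = Hm d i j := by rw [hR]
    rw [show Rᵀ * Hm d * R = Rᵀ * (Hm d * R) from mul_assoc _ _ _] at h
    simp only [Matrix.mul_apply, Hm, Matrix.diagonal_apply, Matrix.transpose_apply, ite_mul,
      zero_mul, neg_mul, Finset.sum_ite_eq, Finset.mem_univ, if_true] at h ⊢
    rw [← h, Fin.sum_univ_succ]
    simp [Fin.succ_ne_zero]
  have hGR : ∀ i j, -(R i 0 * R j 0) + ∑ k : Fin d, R i k.succ * R j k.succ = Hm d i j := by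
    intro i j
    have h : (R * Hm d * Rᵀ) i j = Hm d i j := by rw [hR']
    rw [show R * Hm d * Rᵀ = R * (Hm d * Rᵀ) from mul_assoc _ _ _] at h
    simp only [Matrix.mul_apply, Hm, Matrix.diagonal_apply, Matrix.transpose_apply, ite_mul,
      zero_mul, neg_mul, Finset.sum_ite_eq, Finset.mem_univ, if_true] at h ⊢
    rw [← h, Fin.sum_univ_succ]
    simp [Fin.succ_ne_zero]
  -- notation
  set α : ℝ := R 0 0 with hαdef
  set b : Fin d → ℝ := fun j => R 0 j.succ with hbdef
  set c : Fin d → ℝ := fun i => R i.succ 0 with hcdef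
  set M : Matrix (Fin d) (Fin d) ℝ := fun i j => R i.succ j.succ with hMdef
  set s : ℝ := ∑ j : Fin d, b j ^ 2 with hsdef
  -- Hm entries
  have hm00 : Hm d 0 0 = -1 := by simp [Hm]
  have hm0s : ∀ j : Fin d, Hm d 0 j.succ = 0 := by
    intro j; simp [Hm, Matrix.diagonal_apply, (Fin.succ_ne_zero j).symm]
  have hms0 : ∀ i : Fin d, Hm d i.succ 0 = 0 := by
    intro i; simp [Hm, Matrix.diagonal_apply, Fin.succ_ne_zero i]
  have hmss : ∀ i j : Fin d, Hm d i.succ j.succ = if i = j then 1 else 0 := by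
    intro i j
    by_cases h : i = j
    · simp [Hm, Matrix.diagonal_apply, h, Fin.succ_ne_zero]
    · have h2 : i.succ ≠ j.succ := fun hh => h (Fin.succ_inj.mp hh)
      simp [Hm, Matrix.diagonal_apply, h, h2, Fin.succ_ne_zero]
  -- scalar relations
  have hαs : α ^ 2 = 1 + s := by
    have h := hGR 0 0
    rw [hm00] at h
    have hsum : ∑ k : Fin d, R 0 k.succ * R 0 k.succ = s := by
      rw [hsdef]; exact Finset.sum_congr rfl fun k _ => (pow_two _).symm
    rw [hsum] at h
    nlinarith [h]
  have hc2 : ∑ k : Fin d, c k * c k = α ^ 2 - 1 := by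
    have h := hRGR 0 0
    rw [hm00] at h
    nlinarith [h]
  have hMb : ∀ i, ∑ k, M i k * b k = α * c i := by
    intro i
    have h := hGR i.succ 0
    rw [hms0] at h
    have : ∑ k : Fin d, R i.succ k.succ * R 0 k.succ = ∑ k, M i k * b k := rfl
    rw [this] at h
    linarith [h]
  have hcM : ∀ j, ∑ k, c k * M k j = α * b j := by
    intro j
    have h := hRGR 0 j.succ
    rw [hm0s] at h
    have : ∑ k : Fin d, R k.succ 0 * R k.succ j.succ = ∑ k, c k * M k j := rfl
    rw [this] at h
    linarith [h]
  have hMtM : ∀ j j', ∑ k, M k j * M k j' = (if j = j' then 1 else 0) + b j * b j' := by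
    intro j j'
    have h := hRGR j.succ j'.succ
    rw [hmss] at h
    have : ∑ k : Fin d, R k.succ j.succ * R k.succ j'.succ = ∑ k, M k j * M k j' := rfl
    rw [this] at h
    linarith [h]
  have hα1 : (0:ℝ) < α + 1 := by linarith
  have hα1' : α + 1 ≠ 0 := ne_of_gt hα1
  have hαsqrt : Real.sqrt (1 + s) = α := by
    rw [← hαs, Real.sqrt_sq hpos.le]
  -- the orthogonal matrix
  set U : Matrix (Fin d) (Fin d) ℝ := fun i j => M i j - c i * b j / (α + 1) with hUdef
  have hUb : ∀ i, ∑ k, U i k * b k = c i := by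
    intro i
    have expand : ∀ k, U i k * b k = M i k * b k - (c i / (α + 1)) * b k ^ 2 := by
      intro k; rw [hUdef]; ring
    rw [Finset.sum_congr rfl fun k _ => expand k, Finset.sum_sub_distrib, hMb,
      ← Finset.mul_sum, ← hsdef]
    field_simp
    linear_combination c i * hαs
  refine ⟨U, b, ?_, ?_⟩
  · ext j j'
    rw [Matrix.mul_apply]
    simp only [Matrix.transpose_apply]
    have hinv : (α + 1) * (α + 1)⁻¹ = 1 := mul_inv_cancel₀ hα1'
    have expand : ∀ i, U i j * U i j' =
        M i j * M i j' - (b j' * (α+1)⁻¹) * (c i * M i j) - (b j * (α+1)⁻¹) * (c i * M i j')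
          + (b j * b j' * ((α+1)⁻¹)^2) * (c i * c i) := by
      intro i; rw [hUdef]; field_simp; ring
    rw [Finset.sum_congr rfl fun i _ => expand i]
    rw [Finset.sum_add_distrib, Finset.sum_sub_distrib, Finset.sum_sub_distrib,
      ← Finset.mul_sum, ← Finset.mul_sum, ← Finset.mul_sum, hMtM, hcM, hcM, hc2]
    rw [Matrix.one_apply]
    linear_combination (b j * b j' * ((α - 1) * (α + 1)⁻¹ - 1)) * hinv
  · ext i j
    rw [Matrix.mul_apply]
    refine Fin.cases ?_ ?_ i <;> [skip; intro i'] <;> refine Fin.cases ?_ ?_ j <;>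
      [skip; intro j'; skip; intro j']
    · rw [Fin.sum_univ_succ]
      simp only [RU, Rb, Matrix.of_apply, Fin.cons_zero, Fin.cons_succ]
      simp [hαsqrt, ← hsdef]
      rfl
    · rw [Fin.sum_univ_succ]
      simp only [RU, Rb, Matrix.of_apply, Fin.cons_zero, Fin.cons_succ]
      simp
      rfl
    · rw [Fin.sum_univ_succ]
      simp only [RU, Rb, Matrix.of_apply, Fin.cons_zero, Fin.cons_succ]
      simp only [Pi.zero_apply, zero_mul, zero_add, one_mul]
      rw [hUb]
    · rw [Fin.sum_univ_succ]
      simp only [RU, Rb, Matrix.of_apply, Fin.cons_zero, Fin.cons_succ]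
      simp only [Pi.zero_apply, zero_mul, zero_add, one_mul]
      simp only [sqrtIbb, Matrix.add_apply, Matrix.smul_apply, Matrix.vecMulVec_apply,
        Matrix.one_apply, smul_eq_mul, ← hsdef, hαsqrt]
      have split : ∀ k, U i' k * ((if k = j' then (1:ℝ) else 0) + (α - 1) / s * (b k * b j')) =
          (if k = j' then U i' k else 0) + ((α - 1) / s * b j') * (U i' k * b k) := by
        intro k; by_cases h : k = j' <;> simp [h] <;> ring
      rw [Finset.sum_congr rfl fun k _ => split k, Finset.sum_add_distrib,
        Finset.sum_ite_eq' Finset.univ j' (U i'), ← Finset.mul_sum, hUb]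
      simp only [Finset.mem_univ, if_true]
      have hM : R i'.succ j'.succ = M i' j' := rfl
      rw [hM, hUdef]
      by_cases hs0 : s = 0
      · have hb0 : b j' = 0 := by
          have h0 : ∑ k : Fin d, b k ^ 2 = 0 := by rw [← hsdef, hs0]
          have := (Finset.sum_eq_zero_iff_of_nonneg (fun k _ => sq_nonneg (b k))).mp h0 j'
            (Finset.mem_univ j')
          exact pow_eq_zero_iff (n := 2) (by norm_num) |>.mp this
        simp [hb0]
      · field_simp [hα1']
        linear_combination (-(c i' * b j')) * hαs
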